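/- Let r₁, r₃, k₁, k₃, m₁₃, m₃₁ > 0 with r₁ > m₃₁. Define φ(P₁) = (P₁/m₁₃)·(m₃₁ − r₁·(1 − P₁/k₁)) and ψ(P₃) = (P₃/m₃₁)·(m₁₃ − r₃·(1 − P₃/k₃)). Then there exist P₁ > 0 and P₃ > 0 with P₃ = φ(P₁) and P₁ = ψ(P₃). -/

import Mathlib

set_option maxHeartbeats 1600000 in
/-- Existence of the patch-2-free equilibrium `Q₁` with strictly positive
components: the two convex parabolae given by the first and third equilibrium
equations intersect in the open first quadrant when `r₁ > m₃₁`. -/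
theorem patch2_free_equilibrium_exists
    (r₁ r₃ k₁ k₃ m₁₃ m₃₁ : ℝ)
    (hr₁ : 0 < r₁) (hr₃ : 0 < r₃) (hk₁ : 0 < k₁) (hk₃ : 0 < k₃)
    (hm₁₃ : 0 < m₁₃) (hm₃₁ : 0 < m₃₁) (hfeas : m₃₁ < r₁) :
    ∃ P₁ P₃ : ℝ, 0 < P₁ ∧ 0 < P₃ ∧
      P₃ = (P₁ / m₁₃) * (m₃₁ - r₁ * (1 - P₁ / k₁)) ∧
      P₁ = (P₃ / m₃₁) * (m₁₃ - r₃ * (1 - P₃ / k₃)) := by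
  set φ := fun x : ℝ => (x / m₁₃) * (m₃₁ - r₁ * (1 - x / k₁)) with hφ
  set ψ := fun y : ℝ => (y / m₃₁) * (m₁₃ - r₃ * (1 - y / k₃)) with hψ
  set F := fun x : ℝ => ψ (φ x) - x with hF
  set a : ℝ := k₁ * (1 - m₃₁ / r₁) with ha_def
  have hmr : m₃₁ / r₁ < 1 := (div_lt_one hr₁).mpr hfeas
  have ha : 0 < a := mul_pos hk₁ (by linarith)
  have hcont : Continuous F := by
    apply Continuous.sub _ continuous_id
    apply Continuous.mul
    · exact ((continuous_id.div_const m₁₃).mul (by continuity)).div_const m₃₁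
    · continuity
  -- value at a
  have hφa : φ a = 0 := by
    have h1 : m₃₁ - r₁ * (1 - a / k₁) = 0 := by
      field_simp [ha_def]; rw [ha_def]; have hd : r₁ * (m₃₁ / r₁) = m₃₁ := by field_simp [hr₁.ne']
      linear_combination (-k₁) * hd
    simp [hφ, h1]
  have hFa : F a < 0 := by
    simp only [hF, hφa, hψ]
    simp
    linarith
  -- choose M
  set M : ℝ := max (max k₁ (k₃ * m₁₃ / m₃₁)) (a + 1) with hM_def
  have hM1 : k₁ ≤ M := le_trans (le_max_left _ _) (le_max_left _ _)
  have hM2 : k₃ * m₁₃ / m₃₁ ≤ M := le_trans (le_max_right _ _) (le_max_left _ _)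
  have hM3 : a + 1 ≤ M := le_max_right _ _
  have hMpos : 0 < M := lt_of_lt_of_le (by linarith) hM3
  have hφM_ge : M * m₃₁ / m₁₃ ≤ φ M := by
    have h1 : 1 - M / k₁ ≤ 0 := by
      rw [sub_nonpos, le_div_iff₀ hk₁]
      linarith
    have h2 : m₃₁ ≤ m₃₁ - r₁ * (1 - M / k₁) := by nlinarith
    have h3 : 0 < M / m₁₃ := div_pos hMpos hm₁₃
    calc M * m₃₁ / m₁₃ = (M / m₁₃) * m₃₁ := by ring
    _ ≤ (M / m₁₃) * (m₃₁ - r₁ * (1 - M / k₁)) := by nlinarith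
  have hφM_k₃ : k₃ ≤ φ M := by
    refine le_trans ?_ hφM_ge
    rw [div_le_iff₀ hm₃₁] at hM2
    rw [le_div_iff₀ hm₁₃]
    nlinarith
  have hφM_pos : 0 < φ M := lt_of_lt_of_le hk₃ hφM_k₃
  have hFM : 0 ≤ F M := by
    have h1 : 1 - φ M / k₃ ≤ 0 := by
      rw [sub_nonpos, le_div_iff₀ hk₃]; linarith
    have h2 : m₁₃ ≤ m₁₃ - r₃ * (1 - φ M / k₃) := by nlinarith
    have h3 : 0 < φ M / m₃₁ := div_pos hφM_pos hm₃₁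
    have h4 : φ M / m₃₁ * m₁₃ ≤ ψ (φ M) := by
      simp only [hψ]; nlinarith
    have h5 : M ≤ φ M / m₃₁ * m₁₃ := by
      rw [div_mul_eq_mul_div, le_div_iff₀ hm₃₁]
      have h6 := hφM_ge
      rw [div_le_iff₀ hm₁₃] at h6
      linarith
    show 0 ≤ ψ (φ M) - M
    linarith
  -- IVT
  have haM : a ≤ M := by linarith
  obtain ⟨x, hx_mem, hx⟩ := intermediate_value_Icc haM hcont.continuousOn
    (show (0:ℝ) ∈ Set.Icc (F a) (F M) from ⟨le_of_lt hFa, hFM⟩)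
  have hxa : a < x := by
    rcases lt_or_eq_of_le hx_mem.1 with h | h
    · exact h
    · exfalso; rw [← h] at hx; linarith
  have hxpos : 0 < x := lt_trans ha hxa
  have hφx_pos : 0 < φ x := by
    have h1 : 0 < m₃₁ - r₁ * (1 - x / k₁) := by
      have : 1 - x / k₁ < 1 - a / k₁ := by
        have := (div_lt_div_iff_of_pos_right hk₁).mpr hxa
        linarith
      have h2 : 1 - a / k₁ = m₃₁ / r₁ := by field_simp [ha_def]; rw [ha_def]; have hd : r₁ * (m₃₁ / r₁) = m₃₁ := (by field_simp [hr₁.ne']); linear_combination k₁ * hd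
      rw [h2] at this
      have h3 : r₁ * (1 - x / k₁) < m₃₁ := by
        calc r₁ * (1 - x / k₁) < r₁ * (m₃₁ / r₁) := mul_lt_mul_of_pos_left this hr₁
        _ = m₃₁ := by field_simp
      linarith
    exact mul_pos (div_pos hxpos hm₁₃) h1
  have e1 : φ x = x / m₁₃ * (m₃₁ - r₁ * (1 - x / k₁)) := by rw [hφ]
  have e2 : ψ (φ x) = φ x / m₃₁ * (m₁₃ - r₃ * (1 - φ x / k₃)) := by rw [hψ]
  have hx0 : ψ (φ x) - x = 0 := hx
  exact ⟨x, φ x, hxpos, hφx_pos, e1, by rw [← e2]; linarith⟩
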